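/- If a connected graph G of order n contains vertices u and v with distance d(u,v) = 4, deg(u) ≥ 3, and deg(v) ≥ 2, then γ_{rI}(G) ≤ n − 2. -/

import Mathlib

open scoped Classical
open Finset

/-- A restrained Italian dominating function: values in {0,1,2}, every 0-vertex has
neighborhood weight ≥ 2, and every 0-vertex has a 0-neighbor. -/
def IsRIDF {V : Type*} [Fintype V] (G : SimpleGraph V) (f : V → ℕ) : Prop :=
  (∀ v, f v ≤ 2) ∧
  (∀ v, f v = 0 → 2 ≤ ∑ u ∈ Finset.univ.filter (fun u => G.Adj v u), f u) ∧
  (∀ v, f v = 0 → ∃ u, G.Adj v u ∧ f u = 0)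

/-- The restrained Italian domination number. -/
noncomputable def ridNum {V : Type*} [Fintype V] (G : SimpleGraph V) : ℕ :=
  sInf {w | ∃ f : V → ℕ, IsRIDF G f ∧ ∑ v, f v = w}

/-- A restrained dominating set. -/
def IsRDS {V : Type*} [Fintype V] (G : SimpleGraph V) (S : Finset V) : Prop :=
  (∀ v ∉ S, ∃ u ∈ S, G.Adj v u) ∧ (∀ v ∉ S, ∃ u ∉ S, G.Adj v u)

/-- The restrained domination number. -/
noncomputable def rdNum {V : Type*} [Fintype V] (G : SimpleGraph V) : ℕ :=
  sInf {k | ∃ S : Finset V, IsRDS G S ∧ S.card = k}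

private lemma adj_dist_le {V : Type*} {G : SimpleGraph V} {a b : V} (h : G.Adj a b) :
    G.dist a b ≤ 1 := by
  simpa using SimpleGraph.dist_le (SimpleGraph.Walk.cons h SimpleGraph.Walk.nil)

theorem stmt12 {V : Type*} [Fintype V] (G : SimpleGraph V) (hc : G.Connected)
    (u v : V) (hd : G.dist u v = 4) (hu : 3 ≤ G.degree u) (hv : 2 ≤ G.degree v) :
    ridNum G ≤ Fintype.card V - 2 := by
  classical
  obtain ⟨p, hp⟩ := hc.exists_walk_length_eq_dist u v
  rw [hd] at hp
  -- destructure the walk of length 4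
  cases p with
  | nil => simp at hp
  | cons h1 p =>
  rename_i x1
  cases p with
  | nil => simp at hp
  | cons h2 p =>
  rename_i x2
  cases p with
  | nil => simp at hp
  | cons h3 p =>
  rename_i x3
  cases p with
  | nil => simp at hp
  | cons h4 p =>
  rename_i x4
  cases p with
  | cons h5 p => simp at hp
  | nil =>
  -- distances
  have d1 : G.dist u x1 = 1 := by
    have hle : G.dist u x1 ≤ 1 := adj_dist_le h1
    have hsuf : G.dist x1 v ≤ 3 := by
      simpa using SimpleGraph.dist_le
        (SimpleGraph.Walk.cons h2 (SimpleGraph.Walk.cons h3 (SimpleGraph.Walk.cons h4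
          SimpleGraph.Walk.nil)))
    have htri := hc.dist_triangle (u := u) (v := x1) (w := v)
    omega
  have d2 : G.dist u x2 = 2 := by
    have hle : G.dist u x2 ≤ 2 := by
      simpa using SimpleGraph.dist_le (SimpleGraph.Walk.cons h1 (SimpleGraph.Walk.cons h2
        SimpleGraph.Walk.nil))
    have hsuf : G.dist x2 v ≤ 2 := by
      simpa using SimpleGraph.dist_le
        (SimpleGraph.Walk.cons h3 (SimpleGraph.Walk.cons h4 SimpleGraph.Walk.nil))
    have htri := hc.dist_triangle (u := u) (v := x2) (w := v)
    omega
  have d3 : G.dist u x3 = 3 := by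
    have hle : G.dist u x3 ≤ 3 := by
      simpa using SimpleGraph.dist_le (SimpleGraph.Walk.cons h1 (SimpleGraph.Walk.cons h2
        (SimpleGraph.Walk.cons h3 SimpleGraph.Walk.nil)))
    have hsuf : G.dist x3 v ≤ 1 := adj_dist_le h4
    have htri := hc.dist_triangle (u := u) (v := x3) (w := v)
    omega
  have d0 : G.dist u u = 0 := by simp
  have neq : ∀ a b : V, G.dist u a ≠ G.dist u b → a ≠ b := by
    intro a b hab heq; exact hab (by rw [heq])
  -- pick y, a neighbor of v other than x3
  have hx3mem : x3 ∈ G.neighborFinset v := by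
    rw [SimpleGraph.mem_neighborFinset]; exact h4.symm
  have hy1 : 1 ≤ ((G.neighborFinset v).erase x3).card := by
    rw [Finset.card_erase_of_mem hx3mem, SimpleGraph.card_neighborFinset_eq_degree]
    omega
  obtain ⟨y, hy⟩ := Finset.card_pos.mp (show 0 < ((G.neighborFinset v).erase x3).card by omega)
  have hyx3 : y ≠ x3 := Finset.ne_of_mem_erase hy
  have hvy : G.Adj v y := by
    have := Finset.mem_of_mem_erase hy
    rwa [SimpleGraph.mem_neighborFinset] at this
  have dy : 3 ≤ G.dist u y := by
    have hsuf : G.dist y v ≤ 1 := adj_dist_le hvy.symm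
    have htri := hc.dist_triangle (u := u) (v := y) (w := v)
    omega
  -- distinctness
  have hux1 : u ≠ x1 := neq u x1 (by omega)
  have hux2 : u ≠ x2 := neq u x2 (by omega)
  have hux3 : u ≠ x3 := neq u x3 (by omega)
  have huv : u ≠ v := neq u v (by omega)
  have hx1x2 : x1 ≠ x2 := neq x1 x2 (by omega)
  have hx1x3 : x1 ≠ x3 := neq x1 x3 (by omega)
  have hx1v : x1 ≠ v := neq x1 v (by omega)
  have hx2x3 : x2 ≠ x3 := neq x2 x3 (by omega)
  have hx2v : x2 ≠ v := neq x2 v (by omega)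
  have hx3v : x3 ≠ v := neq x3 v (by omega)
  have hyu : y ≠ u := fun h => by rw [h] at dy; omega
  have hyx1 : y ≠ x1 := fun h => by rw [h] at dy; omega
  have hyx2 : y ≠ x2 := fun h => by rw [h] at dy; omega
  have hyv : y ≠ v := fun h => (G.irrefl (h ▸ hvy))
  -- nonadjacency of u with x3, v
  have hnux3 : ¬ G.Adj u x3 := fun h => by have := adj_dist_le h; omega
  have hnuv : ¬ G.Adj u v := fun h => by have := adj_dist_le h; omega
  -- the function
  set f : V → ℕ := fun w =>
    if w = x2 ∨ w = y then 2 else if w = u ∨ w = x1 ∨ w = x3 ∨ w = v then 0 else 1 with hf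
  have fx2 : f x2 = 2 := by simp [hf]
  have fy : f y = 2 := by simp [hf]
  have fu : f u = 0 := by simp [hf, hux2, hyu.symm]
  have fx1 : f x1 = 0 := by simp [hf, hx1x2, hyx1.symm]
  have fx3 : f x3 = 0 := by simp [hf, hx2x3.symm, hyx3.symm]
  have fv : f v = 0 := by simp [hf, hx2v.symm, hyv.symm]
  have fone : ∀ w, 1 ≤ f w ∨ f w = 0 := by
    intro w; by_cases h : w = x2 ∨ w = y
    · left; simp [hf, h]
    · by_cases h2 : w = u ∨ w = x1 ∨ w = x3 ∨ w = v
      · right; simp [hf, h, h2]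
      · left; simp [hf, h, h2]
  have fzero : ∀ w, f w = 0 → w = u ∨ w = x1 ∨ w = x3 ∨ w = v := by
    intro w hw
    by_cases h : w = x2 ∨ w = y
    · simp [hf, h] at hw
    · by_cases h2 : w = u ∨ w = x1 ∨ w = x3 ∨ w = v
      · exact h2
      · simp [hf, h, h2] at hw
  have fpos : ∀ w, w ≠ u → w ≠ x1 → w ≠ x3 → w ≠ v → 1 ≤ f w := by
    intro w h1 h2 h3 h4
    rcases fone w with h | h
    · exact h
    · rcases fzero w h with rfl | rfl | rfl | rfl <;> contradiction
  -- sum condition for a single heavy neighbor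
  have single : ∀ a b : V, G.Adj a b → f b = 2 →
      2 ≤ ∑ w ∈ Finset.univ.filter (fun w => G.Adj a w), f w := by
    intro a b hab hb
    have hmem : b ∈ Finset.univ.filter (fun w => G.Adj a w) := by
      simp [hab]
    calc 2 = f b := hb.symm
    _ ≤ _ := Finset.single_le_sum (fun i _ => Nat.zero_le _) hmem
  have hRIDF : IsRIDF G f := by
    refine ⟨?_, ?_, ?_⟩
    · intro w
      by_cases h : w = x2 ∨ w = y
      · simp [hf, h]
      · by_cases h2 : w = u ∨ w = x1 ∨ w = x3 ∨ w = v <;> simp [hf, h, h2]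
    · intro w hw
      obtain h' | h' | h' | h' := fzero w hw
      all_goals rw [h']
      · -- w = u : two neighbors ≠ x1 each with f ≥ 1
        have hx1mem : x1 ∈ G.neighborFinset u := by
          rw [SimpleGraph.mem_neighborFinset]; exact h1
        have hcard : 2 ≤ ((G.neighborFinset u).erase x1).card := by
          rw [Finset.card_erase_of_mem hx1mem, SimpleGraph.card_neighborFinset_eq_degree]
          omega
        obtain ⟨a, ha, b, hb, hab⟩ := Finset.one_lt_card.mp (show 1 < ((G.neighborFinset u).erase x1).card by omega)
        have haadj : G.Adj u a := by
          have := Finset.mem_of_mem_erase ha; rwa [SimpleGraph.mem_neighborFinset] at this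
        have hbadj : G.Adj u b := by
          have := Finset.mem_of_mem_erase hb; rwa [SimpleGraph.mem_neighborFinset] at this
        have hfa : 1 ≤ f a := fpos a (fun h => G.irrefl (h ▸ haadj)) (Finset.ne_of_mem_erase ha)
          (fun h => hnux3 (h ▸ haadj)) (fun h => hnuv (h ▸ haadj))
        have hfb : 1 ≤ f b := fpos b (fun h => G.irrefl (h ▸ hbadj)) (Finset.ne_of_mem_erase hb)
          (fun h => hnux3 (h ▸ hbadj)) (fun h => hnuv (h ▸ hbadj))
        have hsub : ({a, b} : Finset V) ⊆ Finset.univ.filter (fun w => G.Adj u w) := by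
          intro w hw
          simp only [Finset.mem_insert, Finset.mem_singleton] at hw
          rcases hw with rfl | rfl <;> simp [haadj, hbadj]
        calc 2 ≤ f a + f b := by omega
        _ = ∑ w ∈ ({a, b} : Finset V), f w := (Finset.sum_pair hab).symm
        _ ≤ _ := Finset.sum_le_sum_of_subset hsub
      · exact single x1 x2 h2 fx2
      · exact single x3 x2 h3.symm fx2
      · exact single v y hvy fy
    · intro w hw
      obtain h' | h' | h' | h' := fzero w hw
      all_goals rw [h']
      · exact ⟨x1, h1, fx1⟩
      · exact ⟨u, h1.symm, fu⟩
      · exact ⟨v, h4, fv⟩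
      · exact ⟨x3, h4.symm, fx3⟩
  -- the sum
  have hm1 : x2 ∉ ({y, u, x1, x3, v} : Finset V) := by
    simp only [Finset.mem_insert, Finset.mem_singleton]
    push_neg
    exact ⟨hyx2.symm, hux2.symm, hx1x2.symm, hx2x3, hx2v⟩
  have hm2 : y ∉ ({u, x1, x3, v} : Finset V) := by
    simp only [Finset.mem_insert, Finset.mem_singleton]
    push_neg
    exact ⟨hyu, hyx1, hyx3, hyv⟩
  have hm3 : u ∉ ({x1, x3, v} : Finset V) := by
    simp only [Finset.mem_insert, Finset.mem_singleton]
    push_neg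
    exact ⟨hux1, hux3, huv⟩
  have hm4 : x1 ∉ ({x3, v} : Finset V) := by
    simp only [Finset.mem_insert, Finset.mem_singleton]
    push_neg
    exact ⟨hx1x3, hx1v⟩
  have hm5 : x3 ∉ ({v} : Finset V) := by
    simp only [Finset.mem_singleton]
    exact hx3v
  have hsum : ∑ w, f w = Fintype.card V - 2 := by
    have hT : ({x2, y, u, x1, x3, v} : Finset V).card = 6 := by
      rw [Finset.card_insert_of_notMem hm1, Finset.card_insert_of_notMem hm2,
        Finset.card_insert_of_notMem hm3, Finset.card_insert_of_notMem hm4,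
        Finset.card_insert_of_notMem hm5, Finset.card_singleton]
    have hsplit := Finset.sum_add_sum_compl ({x2, y, u, x1, x3, v} : Finset V) f
    have hTs : ∑ w ∈ ({x2, y, u, x1, x3, v} : Finset V), f w = 4 := by
      rw [Finset.sum_insert hm1, Finset.sum_insert hm2, Finset.sum_insert hm3,
        Finset.sum_insert hm4, Finset.sum_insert hm5, Finset.sum_singleton,
        fx2, fy, fu, fx1, fx3, fv]
      rfl
    have hCs : ∑ w ∈ ({x2, y, u, x1, x3, v} : Finset V)ᶜ, f w
        = (({x2, y, u, x1, x3, v} : Finset V)ᶜ).card := by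
      rw [Finset.card_eq_sum_ones]
      apply Finset.sum_congr rfl
      intro w hw
      simp only [Finset.mem_compl, Finset.mem_insert, Finset.mem_singleton] at hw
      push_neg at hw
      obtain ⟨w2, wy, wu, w1, w3, wv⟩ := hw
      simp [hf, w2, wy, wu, w1, w3, wv]
    have hCcard : (({x2, y, u, x1, x3, v} : Finset V)ᶜ).card = Fintype.card V - 6 := by
      rw [Finset.card_compl, hT]
    have hn6 : 6 ≤ Fintype.card V := by
      rw [← hT]; exact Finset.card_le_univ _
    omega
  exact Nat.sInf_le ⟨f, hRIDF, hsum⟩
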